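/- Let A = W_L D_{L-1} W_{L-1} ⋯ D_1 W_1 where each D_ℓ is a diagonal matrix with entries in {a, 1} for some a ∈ (−1, 1], and suppose rank A = k. Then |A|_+ ≤ Π_{ℓ=1}^L |W_ℓ|_k, where |A|_+ is the product of the k nonzero singular values of A and |W|_k is the product of the k largest singular values of W. -/

import Mathlib

open Matrix Finset

/-- The singular values of a real matrix, listed in decreasing order (square roots of the
eigenvalues of `Aᵀ A`, sorted). -/
noncomputable def singularValues {m n : ℕ} (A : Matrix (Fin m) (Fin n) ℝ) : Fin n → ℝ :=
  fun i => Real.sqrt (((Matrix.isHermitian_conjTranspose_mul_self A).eigenvalues ∘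
    Tuple.sort ((Matrix.isHermitian_conjTranspose_mul_self A).eigenvalues)) i.rev)

/-- The `i`-th largest singular value (0-indexed), zero-padded beyond the matrix dimensions. -/
noncomputable def sval {m n : ℕ} (A : Matrix (Fin m) (Fin n) ℝ) (i : ℕ) : ℝ :=
  if h : i < n then singularValues A ⟨i, h⟩ else 0


/-- The `k`-determinant: the product of the `k` largest singular values. -/
noncomputable def kDet {m n : ℕ} (A : Matrix (Fin m) (Fin n) ℝ) (k : ℕ) : ℝ :=
  ∏ i ∈ Finset.range k, sval A i


/-- The pseudo-determinant: the product of the nonzero singular values. -/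
noncomputable def pseudoDet {m n : ℕ} (A : Matrix (Fin m) (Fin n) ℝ) : ℝ :=
  ∏ i ∈ Finset.univ.filter (fun i => singularValues A i ≠ 0), singularValues A i


/-- The product `W_{ℓ} D_{ℓ-1} ⋯ D_1 W_1` of layers `1,…,ℓ`. -/
def netProd {n : ℕ} (W D : ℕ → Matrix (Fin n) (Fin n) ℝ) : ℕ → Matrix (Fin n) (Fin n) ℝ
  | 0 => 1
  | ℓ + 1 => W (ℓ + 1) * D ℓ * netProd W D ℓ


open Equiv

variable {R : Type*} [CommRing R]

/-- Index type: `k`-element subsets of `Fin n`. -/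
abbrev KSub (n k : ℕ) := {s : Finset (Fin n) // s.card = k}

/-- The increasing enumeration of a `k`-subset. -/
def kEmb {n k : ℕ} (s : KSub n k) : Fin k → Fin n := fun j => s.1.orderEmbOfFin s.2 j

lemma kEmb_strictMono {n k : ℕ} (s : KSub n k) : StrictMono (kEmb s) :=
  (s.1.orderEmbOfFin s.2).strictMono

lemma kEmb_injective {n k : ℕ} (s : KSub n k) : Function.Injective (kEmb s) :=
  (kEmb_strictMono s).injective

lemma kEmb_mem {n k : ℕ} (s : KSub n k) (j : Fin k) : kEmb s j ∈ s.1 :=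
  Finset.orderEmbOfFin_mem _ _ _

lemma kEmb_image {n k : ℕ} (s : KSub n k) : Finset.image (kEmb s) Finset.univ = s.1 := by
  apply Finset.eq_of_subset_of_card_le
  · intro x hx
    simp only [Finset.mem_image] at hx
    obtain ⟨j, _, rfl⟩ := hx
    exact kEmb_mem s j
  · rw [s.2, Finset.card_image_of_injective _ (kEmb_injective s), Finset.card_univ,
      Fintype.card_fin]

lemma kEmb_surjOn {n k : ℕ} (s : KSub n k) (x : Fin n) (hx : x ∈ s.1) :
    ∃ j, kEmb s j = x := by
  have := kEmb_image s
  rw [← this] at hx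
  simp only [Finset.mem_image] at hx
  obtain ⟨j, _, rfl⟩ := hx
  exact ⟨j, rfl⟩

/-- **Cauchy–Binet formula**. -/
theorem cauchyBinet {k n : ℕ} (A : Matrix (Fin k) (Fin n) R) (B : Matrix (Fin n) (Fin k) R) :
    (A * B).det = ∑ s : KSub n k,
      (A.submatrix id (kEmb s)).det * (B.submatrix (kEmb s) id).det := by
  classical
  -- Step 1: expand
  have step1 : (A * B).det =
      ∑ f : Fin k → Fin n, (A.submatrix id f).det * ∏ i, B (f i) i := by
    have : (A * B).det = ∑ f : Fin k → Fin n, ∑ σ : Equiv.Perm (Fin k),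
        Equiv.Perm.sign σ * ∏ i, A (σ i) (f i) * B (f i) i := by
      simp only [det_apply', mul_apply, Finset.prod_univ_sum, Finset.mul_sum,
        Fintype.piFinset_univ]
      rw [Finset.sum_comm]
    rw [this]
    refine Finset.sum_congr rfl fun f _ => ?_
    rw [det_apply', Finset.sum_mul]
    refine Finset.sum_congr rfl fun σ _ => ?_
    simp only [submatrix_apply, id_eq, Finset.prod_mul_distrib]
    ring
  rw [step1]
  -- Step 2: non-injective terms vanish
  have hz : ∀ f : Fin k → Fin n, ¬ Function.Injective f →
      (A.submatrix id f).det * ∏ i, B (f i) i = 0 := by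
    intro f hf
    obtain ⟨i, j, hij, hne⟩ : ∃ i j, f i = f j ∧ i ≠ j := by
      rw [Function.Injective] at hf; push_neg at hf
      obtain ⟨i, j, h1, h2⟩ := hf; exact ⟨i, j, h1, h2⟩
    rw [det_zero_of_column_eq hne (fun x => by simp [hij]), zero_mul]
  rw [← Finset.sum_filter_add_sum_filter_not Finset.univ (fun f => Function.Injective f)]
  have h2 : ∑ f ∈ Finset.univ.filter (fun f => ¬ Function.Injective f),
      (A.submatrix id f).det * ∏ i, B (f i) i = 0 :=
    Finset.sum_eq_zero fun f hfm => hz f (by simpa using (Finset.mem_filter.mp hfm).2)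
  rw [h2, add_zero]
  -- Step 3: reindex injective functions by (subset, permutation)
  rw [Finset.sum_subtype (p := fun f : Fin k → Fin n => Function.Injective f)
    _ (fun f => by simp)]
  have hbij : Function.Bijective
      (fun p : KSub n k × Equiv.Perm (Fin k) =>
        (⟨kEmb p.1 ∘ p.2, (kEmb_injective p.1).comp p.2.injective⟩ :
          {f : Fin k → Fin n // Function.Injective f})) := by
    constructor
    · rintro ⟨s, σ⟩ ⟨t, τ⟩ h
      have h' : kEmb s ∘ σ = kEmb t ∘ τ := congrArg Subtype.val h
      have hst : s = t := by
        apply Subtype.ext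
        rw [← kEmb_image s, ← kEmb_image t]
        calc Finset.image (kEmb s) Finset.univ
            = Finset.image (kEmb s ∘ σ) Finset.univ := by
              rw [← Finset.image_image, Finset.image_univ_equiv]
          _ = Finset.image (kEmb t ∘ τ) Finset.univ := by rw [h']
          _ = Finset.image (kEmb t) Finset.univ := by
              rw [← Finset.image_image, Finset.image_univ_equiv]
      subst hst
      have hστ : σ = τ := by
        ext i
        exact congrArg Fin.val (kEmb_injective s (congrFun h' i))
      rw [hστ]
    · rintro ⟨f, hf⟩
      set s : KSub n k := ⟨Finset.univ.image f, by
        rw [Finset.card_image_of_injective _ hf, Finset.card_univ, Fintype.card_fin]⟩ with hs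
      have hmem : ∀ i, f i ∈ s.1 := fun i => Finset.mem_image_of_mem f (Finset.mem_univ i)
      have hg : ∀ i, ∃ j, kEmb s j = f i := fun i => kEmb_surjOn s (f i) (hmem i)
      choose g hgspec using hg
      have hginj : Function.Injective g := fun i i' hii => by
        apply hf; rw [← hgspec i, ← hgspec i', hii]
      refine ⟨⟨s, Equiv.ofBijective g (Finite.injective_iff_bijective.mp hginj)⟩, ?_⟩
      apply Subtype.ext
      funext i
      exact hgspec i
  rw [← Fintype.sum_bijective _ hbij _
    (fun f => (A.submatrix id f.1).det * ∏ i, B (f.1 i) i) (fun p => rfl)]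
  -- Step 4: compute the sum over pairs
  rw [Fintype.sum_prod_type]
  refine Finset.sum_congr rfl fun s _ => ?_
  have key : ∀ σ : Equiv.Perm (Fin k),
      (A.submatrix id (kEmb s ∘ σ)).det = Equiv.Perm.sign σ * (A.submatrix id (kEmb s)).det := by
    intro σ
    have : A.submatrix id (kEmb s ∘ σ) = (A.submatrix id (kEmb s)).submatrix id σ := rfl
    rw [this, det_permute']
  simp only [key]
  rw [det_apply' (M := B.submatrix (kEmb s) id), Finset.mul_sum]
  refine Finset.sum_congr rfl fun σ _ => ?_
  simp only [submatrix_apply, id_eq, Function.comp_apply]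
  ring

/-- The `k`-th compound matrix. -/
def cpd {n : ℕ} (k : ℕ) (A : Matrix (Fin n) (Fin n) R) : Matrix (KSub n k) (KSub n k) R :=
  fun s t => (A.submatrix (kEmb s) (kEmb t)).det

theorem cpd_mul {n k : ℕ} (A B : Matrix (Fin n) (Fin n) R) :
    cpd k (A * B) = cpd k A * cpd k B := by
  ext s t
  have h1 : (A * B).submatrix (kEmb s) (kEmb t) =
      (A.submatrix (kEmb s) id) * (B.submatrix id (kEmb t)) := by
    ext i j; simp [Matrix.mul_apply]
  show ((A * B).submatrix (kEmb s) (kEmb t)).det = _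
  rw [h1, cauchyBinet, Matrix.mul_apply]
  exact Finset.sum_congr rfl fun u _ => rfl

theorem cpd_apply_ne {n k : ℕ} (A : Matrix (Fin n) (Fin n) R)
    (hA : ∀ i j, i ≠ j → A i j = 0) {s t : KSub n k} (hst : s ≠ t) : cpd k A s t = 0 := by
  have : ∃ x ∈ s.1, x ∉ t.1 := by
    by_contra hc
    push_neg at hc
    exact hst (Subtype.ext (Finset.eq_of_subset_of_card_le hc (le_of_eq (t.2.trans s.2.symm))))
  obtain ⟨x, hxs, hxt⟩ := this
  obtain ⟨i, rfl⟩ := kEmb_surjOn s x hxs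
  exact det_eq_zero_of_row_eq_zero i fun j =>
    hA _ _ (fun h => hxt (h ▸ kEmb_mem t j))

theorem cpd_diagonal {n k : ℕ} (d : Fin n → R) :
    cpd k (diagonal d) = diagonal (fun s : KSub n k => ∏ i ∈ s.1, d i) := by
  ext s t
  by_cases h : s = t
  · subst h
    have h1 : (diagonal d).submatrix (kEmb s) (kEmb s) = diagonal (d ∘ kEmb s) := by
      ext i j
      by_cases hij : i = j
      · subst hij; simp
      · rw [diagonal_apply_ne _ hij, submatrix_apply,
          diagonal_apply_ne _ (fun hc => hij (kEmb_injective s hc))]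
    show ((diagonal d).submatrix (kEmb s) (kEmb s)).det = _
    rw [h1, det_diagonal, diagonal_apply_eq]
    rw [← kEmb_image s, Finset.prod_image (fun i _ j _ h => kEmb_injective s h)]
    rfl
  · rw [diagonal_apply_ne _ h]
    exact cpd_apply_ne _ (fun i j => diagonal_apply_ne d) h

theorem cpd_one {n k : ℕ} : cpd k (1 : Matrix (Fin n) (Fin n) R) = 1 := by
  rw [← Matrix.diagonal_one, cpd_diagonal]
  simp

theorem cpd_transpose {n k : ℕ} (A : Matrix (Fin n) (Fin n) R) :
    cpd k (Aᵀ) = (cpd k A)ᵀ := by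
  ext s t
  show ((Aᵀ).submatrix (kEmb s) (kEmb t)).det = ((A.submatrix (kEmb t) (kEmb s))).det
  rw [← transpose_submatrix, det_transpose]

section NormFacts

open scoped Matrix.Norms.L2Operator

variable {ι : Type*} [Fintype ι] [DecidableEq ι]

lemma real_conjTranspose_eq_transpose {κ : Type*} (A : Matrix ι κ ℝ) : Aᴴ = Aᵀ :=
  Matrix.conjTranspose_eq_transpose_of_trivial A

lemma l2_norm_nonneg (A : Matrix ι ι ℝ) : 0 ≤ ‖A‖ := norm_nonneg _

lemma l2_norm_diagonal_le (d : ι → ℝ) (c : ℝ) (hc : 0 ≤ c) (h : ∀ i, |d i| ≤ c) :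
    ‖Matrix.diagonal d‖ ≤ c := by
  rw [Matrix.l2_opNorm_def]
  apply ContinuousLinearMap.opNorm_le_bound _ hc
  intro x
  simp only [LinearEquiv.trans_apply, LinearMap.coe_toContinuousLinearMap']
  have hx : ∀ (y : EuclideanSpace ℝ ι), Matrix.toEuclideanLin (Matrix.diagonal d) y =
      (WithLp.equiv 2 (ι → ℝ)).symm ((Matrix.diagonal d) *ᵥ (WithLp.equiv 2 (ι → ℝ) y)) := by
    intro y; rfl
  rw [hx]
  rw [EuclideanSpace.norm_eq, EuclideanSpace.norm_eq]
  rw [← Real.sqrt_sq hc, ← Real.sqrt_mul (by positivity)]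
  apply Real.sqrt_le_sqrt
  rw [Finset.mul_sum]
  apply Finset.sum_le_sum
  intro i _
  have : ((WithLp.equiv 2 (ι → ℝ)).symm ((Matrix.diagonal d) *ᵥ (WithLp.equiv 2 (ι → ℝ) x))) i
      = d i * (WithLp.equiv 2 (ι → ℝ) x) i := by
    simp [Matrix.mulVec_diagonal]
  rw [this]
  rw [Real.norm_eq_abs, abs_mul, mul_pow]
  have h2 : |d i| ^ 2 ≤ c ^ 2 := by
    apply pow_le_pow_left₀ (abs_nonneg _) (h i)
  have h3 : (0:ℝ) ≤ |(WithLp.equiv 2 (ι → ℝ) x) i| ^ 2 := by positivity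
  calc |d i| ^ 2 * |(WithLp.equiv 2 (ι → ℝ) x) i| ^ 2
      ≤ c ^ 2 * |(WithLp.equiv 2 (ι → ℝ) x) i| ^ 2 := by nlinarith
    _ = c ^ 2 * ‖x i‖ ^ 2 := rfl

lemma l2_norm_diagonal_ge (d : ι → ℝ) (i : ι) : |d i| ≤ ‖Matrix.diagonal d‖ := by
  have h := Matrix.l2_opNorm_mulVec (Matrix.diagonal d) (EuclideanSpace.single i 1)
  rw [EuclideanSpace.norm_single] at h
  have heq : (EuclideanSpace.equiv ι ℝ).symm ((Matrix.diagonal d) *ᵥ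
      (EuclideanSpace.single i (1:ℝ))) = EuclideanSpace.single i (d i) := by
    apply PiLp.ext
    intro j
    show ((Matrix.diagonal d) *ᵥ (EuclideanSpace.single i (1:ℝ))) j
        = EuclideanSpace.single i (d i) j
    rw [Matrix.mulVec_diagonal]
    by_cases hji : j = i
    · subst hji; simp [EuclideanSpace.single_apply]
    · simp [EuclideanSpace.single_apply, hji]
  rw [heq, EuclideanSpace.norm_single, norm_one, mul_one, Real.norm_eq_abs] at h
  exact h

lemma l2_norm_one_le : ‖(1 : Matrix ι ι ℝ)‖ ≤ 1 := by
  rw [Matrix.cstar_norm_def, _root_.map_one]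
  exact ContinuousLinearMap.norm_id_le

lemma l2_norm_orth_le (Q : Matrix ι ι ℝ) (hQ : Qᵀ * Q = 1) : ‖Q‖ ≤ 1 := by
  have h1 : ‖Qᴴ * Q‖ = ‖Q‖ * ‖Q‖ := Matrix.l2_opNorm_conjTranspose_mul_self Q
  rw [real_conjTranspose_eq_transpose, hQ] at h1
  nlinarith [l2_norm_one_le (ι := ι), l2_norm_nonneg Q]

lemma l2_norm_conj_orth (Q X : Matrix ι ι ℝ) (hQ : Qᵀ * Q = 1) (hQ' : Q * Qᵀ = 1) :
    ‖Q * X * Qᵀ‖ = ‖X‖ := by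
  have hQn : ‖Q‖ ≤ 1 := l2_norm_orth_le Q hQ
  have hQtn : ‖Qᵀ‖ ≤ 1 := by
    apply l2_norm_orth_le
    rwa [Matrix.transpose_transpose]
  have hle : ∀ Y : Matrix ι ι ℝ, ‖Q * Y * Qᵀ‖ ≤ ‖Y‖ := by
    intro Y
    have a1 : ‖Q * Y * Qᵀ‖ ≤ ‖Q * Y‖ * ‖Qᵀ‖ := Matrix.l2_opNorm_mul _ _
    have a2 : ‖Q * Y‖ ≤ ‖Q‖ * ‖Y‖ := Matrix.l2_opNorm_mul _ _
    have a3 : ‖Q * Y‖ * ‖Qᵀ‖ ≤ ‖Q * Y‖ * 1 := by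
      exact mul_le_mul_of_nonneg_left hQtn (l2_norm_nonneg _)
    have a4 : ‖Q * Y‖ ≤ 1 * ‖Y‖ :=
      le_trans a2 (mul_le_mul_of_nonneg_right hQn (l2_norm_nonneg _))
    linarith [l2_norm_nonneg (Q * Y), l2_norm_nonneg Y]
  apply le_antisymm (hle X)
  have h2 : Qᵀ * (Q * X * Qᵀ) * (Qᵀ)ᵀ = X := by
    rw [Matrix.transpose_transpose]
    calc Qᵀ * (Q * X * Qᵀ) * Q = (Qᵀ * Q) * X * (Qᵀ * Q) := by noncomm_ring
      _ = X := by rw [hQ, one_mul, mul_one]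
  calc ‖X‖ = ‖Qᵀ * (Q * X * Qᵀ) * (Qᵀ)ᵀ‖ := by rw [h2]
    _ ≤ ‖Q * X * Qᵀ‖ := by
        have h3 : ∀ Y : Matrix ι ι ℝ, ‖Qᵀ * Y * (Qᵀ)ᵀ‖ ≤ ‖Y‖ := by
          intro Y
          rw [Matrix.transpose_transpose]
          have a1 : ‖Qᵀ * Y * Q‖ ≤ ‖Qᵀ * Y‖ * ‖Q‖ := Matrix.l2_opNorm_mul _ _
          have a2 : ‖Qᵀ * Y‖ ≤ ‖Qᵀ‖ * ‖Y‖ := Matrix.l2_opNorm_mul _ _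
          have a3 : ‖Qᵀ * Y‖ * ‖Q‖ ≤ ‖Qᵀ * Y‖ * 1 := by
            exact mul_le_mul_of_nonneg_left hQn (l2_norm_nonneg _)
          have a4 : ‖Qᵀ * Y‖ ≤ 1 * ‖Y‖ :=
            le_trans a2 (mul_le_mul_of_nonneg_right hQtn (l2_norm_nonneg _))
          linarith [l2_norm_nonneg (Qᵀ * Y), l2_norm_nonneg Y]
        exact h3 _

end NormFacts

section Combinatorics

lemma fin_strictMono_le {k n : ℕ} (f : Fin k → Fin n) (hf : StrictMono f) (j : Fin k) :
    (j : ℕ) ≤ (f j : ℕ) := by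
  suffices h : ∀ m (hm : m < k), m ≤ (f ⟨m, hm⟩ : ℕ) from h j.1 j.2
  intro m
  induction m with
  | zero => intro _; exact Nat.zero_le _
  | succ p ih =>
    intro hm
    have hp : p < k := Nat.lt_of_succ_lt hm
    have h1 : (p : ℕ) ≤ (f ⟨p, hp⟩ : ℕ) := ih hp
    have h2 : f ⟨p, hp⟩ < f ⟨p + 1, hm⟩ := hf (by simp [Fin.lt_def])
    rw [Fin.lt_def] at h2
    omega

lemma ksub_card_le {n k : ℕ} (t : KSub n k) : k ≤ n := by
  rw [← t.2]
  simpa using Finset.card_le_card (Finset.subset_univ t.1)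

lemma kEmb_le {n k : ℕ} (t : KSub n k) (j : Fin k) : (kEmb t j : ℕ) ≤ n - k + j := by
  have hkn : k ≤ n := ksub_card_le t
  have hg : StrictMono (fun l : Fin k => (kEmb t l.rev).rev) := by
    intro l l' hll
    exact Fin.rev_lt_rev.mpr (kEmb_strictMono t (Fin.rev_lt_rev.mpr hll))
  have h1 := fin_strictMono_le _ hg j.rev
  simp only [Fin.rev_rev] at h1
  rw [Fin.val_rev, Fin.val_rev] at h1
  have h2 : (kEmb t j : ℕ) < n := (kEmb t j).2
  have h3 : (j : ℕ) < k := j.2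
  omega

end Combinatorics

section ProdBounds

lemma prod_ksub_eq {n k : ℕ} (f : Fin n → ℝ) (t : KSub n k) :
    ∏ i ∈ t.1, f i = ∏ j : Fin k, f (kEmb t j) := by
  rw [← kEmb_image t, Finset.prod_image (fun i _ j _ h => kEmb_injective t h)]

lemma prod_mono_le {n k : ℕ} (hkn : k ≤ n) (μ : Fin n → ℝ) (hm : Monotone μ)
    (h0 : ∀ i, 0 ≤ μ i) (t : KSub n k) :
    ∏ i ∈ t.1, μ i ≤ ∏ j : Fin k, μ (Fin.rev (Fin.castLE hkn j)) := by
  rw [prod_ksub_eq]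
  rw [← Equiv.prod_comp (Fin.revPerm : Equiv.Perm (Fin k))
    (fun j => μ (Fin.rev (Fin.castLE hkn j)))]
  apply Finset.prod_le_prod (fun j _ => h0 _)
  intro j _
  apply hm
  rw [Fin.le_def]
  show (kEmb t j : ℕ) ≤ (Fin.rev (Fin.castLE hkn (Fin.revPerm j)) : ℕ)
  rw [Fin.val_rev]
  have h1 := kEmb_le t j
  have h2 : (Fin.castLE hkn (Fin.revPerm j) : ℕ) = k - (j + 1 : ℕ) := by
    simp [Fin.val_rev]
  rw [h2]
  have h3 : (j : ℕ) < k := j.2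
  omega

lemma exists_ksub_prod {n k : ℕ} (hkn : k ≤ n) (lam : Fin n → ℝ) (σ : Equiv.Perm (Fin n)) :
    ∃ t : KSub n k, ∏ i ∈ t.1, lam i = ∏ j : Fin k, lam (σ (Fin.rev (Fin.castLE hkn j))) := by
  refine ⟨⟨Finset.univ.map ⟨fun j : Fin k => σ (Fin.rev (Fin.castLE hkn j)), ?_⟩, ?_⟩, ?_⟩
  · intro a b hab
    have := σ.injective hab
    have := Fin.rev_injective this
    exact Fin.castLE_injective hkn this
  · rw [Finset.card_map, Finset.card_univ, Fintype.card_fin]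
  · rw [Finset.prod_map]
    rfl

end ProdBounds

section Spectral

open scoped Matrix.Norms.L2Operator

variable {n : ℕ}

/-- The increasingly sorted eigenvalues of `Wᴴ * W`. -/
noncomputable def sortedEig {m : ℕ} (W : Matrix (Fin m) (Fin n) ℝ) : Fin n → ℝ :=
  (Matrix.isHermitian_conjTranspose_mul_self W).eigenvalues ∘
    Tuple.sort ((Matrix.isHermitian_conjTranspose_mul_self W).eigenvalues)

lemma sortedEig_nonneg {m : ℕ} (W : Matrix (Fin m) (Fin n) ℝ) (i : Fin n) :
    0 ≤ sortedEig W i :=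
  Matrix.eigenvalues_conjTranspose_mul_self_nonneg W _

lemma sortedEig_mono {m : ℕ} (W : Matrix (Fin m) (Fin n) ℝ) : Monotone (sortedEig W) :=
  Tuple.monotone_sort _

lemma singularValues_eq {m : ℕ} (W : Matrix (Fin m) (Fin n) ℝ) (i : Fin n) :
    singularValues W i = Real.sqrt (sortedEig W i.rev) := rfl

lemma sval_nonneg {m : ℕ} (W : Matrix (Fin m) (Fin n) ℝ) (i : ℕ) : 0 ≤ sval W i := by
  unfold sval
  split
  · exact Real.sqrt_nonneg _
  · exact le_refl 0

lemma kDet_nonneg {m : ℕ} (W : Matrix (Fin m) (Fin n) ℝ) (k : ℕ) : 0 ≤ kDet W k :=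
  Finset.prod_nonneg fun i _ => sval_nonneg W i

lemma kDet_sq {m k : ℕ} (hkn : k ≤ n) (W : Matrix (Fin m) (Fin n) ℝ) :
    kDet W k ^ 2 = ∏ j : Fin k, sortedEig W (Fin.rev (Fin.castLE hkn j)) := by
  rw [kDet, ← Finset.prod_pow, ← Fin.prod_univ_eq_prod_range (fun i => sval W i ^ 2) k]
  refine Finset.prod_congr rfl fun j _ => ?_
  have hj : (j : ℕ) < n := lt_of_lt_of_le j.2 hkn
  rw [sval, dif_pos hj]
  rw [singularValues_eq]
  rw [Real.sq_sqrt (sortedEig_nonneg _ _)]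
  rfl

lemma norm_cpd_eq {k : ℕ} (hkn : k ≤ n) (W : Matrix (Fin n) (Fin n) ℝ) :
    ‖cpd k W‖ = kDet W k := by
  classical
  have hM := Matrix.isHermitian_conjTranspose_mul_self W
  set lam := hM.eigenvalues with hlam
  have hlam0 : ∀ i, 0 ≤ lam i := fun i =>
    Matrix.eigenvalues_conjTranspose_mul_self_nonneg W i
  set σ := Tuple.sort lam with hσdef
  have hsort : sortedEig W = lam ∘ σ := rfl
  set U : Matrix (Fin n) (Fin n) ℝ :=
    (Matrix.IsHermitian.eigenvectorUnitary hM : Matrix (Fin n) (Fin n) ℝ) with hUdef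
  have hstarU : star U = Uᵀ := by
    rw [Matrix.star_eq_conjTranspose, real_conjTranspose_eq_transpose]
  have hspec : Wᴴ * W = U * Matrix.diagonal lam * Uᵀ := by
    rw [← hstarU]
    have h := hM.spectral_theorem
    rw [RCLike.ofReal_real_eq_id, Function.id_comp] at h
    exact h
  have hU1 : Uᵀ * U = 1 := by
    rw [← hstarU]
    exact (Unitary.mem_iff.mp (Matrix.IsHermitian.eigenvectorUnitary hM).2).1
  have hU2 : U * Uᵀ = 1 := by
    rw [← hstarU]
    exact (Unitary.mem_iff.mp (Matrix.IsHermitian.eigenvectorUnitary hM).2).2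
  set π : KSub n k → ℝ := fun s => ∏ i ∈ s.1, lam i with hπ
  have hcM : cpd k (Wᴴ * W) = cpd k U * Matrix.diagonal π * (cpd k U)ᵀ := by
    rw [hspec, cpd_mul, cpd_mul, cpd_diagonal, cpd_transpose]
  have hQ1 : (cpd k U)ᵀ * cpd k U = 1 := by
    rw [← cpd_transpose, ← cpd_mul, hU1, cpd_one]
  have hQ2 : cpd k U * (cpd k U)ᵀ = 1 := by
    rw [← cpd_transpose, ← cpd_mul, hU2, cpd_one]
  have hnorm1 : ‖cpd k (Wᴴ * W)‖ = ‖Matrix.diagonal π‖ := by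
    rw [hcM]; exact l2_norm_conj_orth _ _ hQ1 hQ2
  set P := ∏ j : Fin k, sortedEig W (Fin.rev (Fin.castLE hkn j)) with hPdef
  have hP0 : 0 ≤ P := Finset.prod_nonneg fun j _ => sortedEig_nonneg _ _
  have hπ0 : ∀ s, 0 ≤ π s := fun s => Finset.prod_nonneg fun i _ => hlam0 i
  have hπP : ∀ s, |π s| ≤ P := by
    intro s
    rw [abs_of_nonneg (hπ0 s)]
    have hstep : π s = ∏ i ∈ s.1.image σ.symm, sortedEig W i := by
      rw [Finset.prod_image (fun i _ j _ h => σ.symm.injective h)]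
      refine Finset.prod_congr rfl fun i _ => ?_
      rw [hsort]
      simp
    rw [hstep]
    exact prod_mono_le hkn (sortedEig W) (sortedEig_mono W) (sortedEig_nonneg W)
      ⟨s.1.image σ.symm, by rw [Finset.card_image_of_injective _ σ.symm.injective, s.2]⟩
  have hPex : ∃ s : KSub n k, π s = P := by
    obtain ⟨t, ht⟩ := exists_ksub_prod hkn lam σ
    exact ⟨t, ht⟩
  have hdiag : ‖Matrix.diagonal π‖ = P := by
    apply le_antisymm (l2_norm_diagonal_le π P hP0 hπP)
    obtain ⟨s, hs⟩ := hPex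
    calc P = |π s| := by rw [abs_of_nonneg (hπ0 s), hs]
      _ ≤ ‖Matrix.diagonal π‖ := l2_norm_diagonal_ge π s
  have hsq : ‖cpd k W‖ ^ 2 = P := by
    have hcstar := Matrix.l2_opNorm_conjTranspose_mul_self (cpd k W)
    have hct : (cpd k W)ᴴ = cpd k (Wᴴ) := by
      rw [real_conjTranspose_eq_transpose, real_conjTranspose_eq_transpose, cpd_transpose]
    rw [hct, ← cpd_mul, hnorm1, hdiag] at hcstar
    rw [pow_two, ← hcstar]
  have h1 : kDet W k ^ 2 = P := kDet_sq hkn W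
  have h2 : 0 ≤ kDet W k := kDet_nonneg W k
  have h3 : 0 ≤ ‖cpd k W‖ := l2_norm_nonneg _
  nlinarith [hsq, h1, h2, h3, sq_nonneg (‖cpd k W‖ - kDet W k), sq_nonneg (‖cpd k W‖ + kDet W k)]

end Spectral

section PseudoDet

open scoped Matrix.Norms.L2Operator

variable {n : ℕ}

lemma sortedEig_card_ne {m k : ℕ} (A : Matrix (Fin m) (Fin n) ℝ) (hrank : A.rank = k) :
    (Finset.univ.filter (fun i => sortedEig A i ≠ 0)).card = k := by
  classical
  have hM := Matrix.isHermitian_conjTranspose_mul_self A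
  have h1 : (Aᴴ * A).rank = k := by
    have : Aᴴ = Aᵀ := real_conjTranspose_eq_transpose A
    rw [this, Matrix.rank_transpose_mul_self, hrank]
  have h2 : (Aᴴ * A).rank = Fintype.card {i // hM.eigenvalues i ≠ 0} :=
    hM.rank_eq_card_non_zero_eigs
  have h3 : Fintype.card {i : Fin n // sortedEig A i ≠ 0}
      = Fintype.card {i : Fin n // hM.eigenvalues i ≠ 0} :=
    Fintype.card_congr (Equiv.subtypeEquiv (Tuple.sort hM.eigenvalues) (fun i => Iff.rfl))
  rw [← Fintype.card_subtype, h3, ← h2, h1]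

lemma sortedEig_ne_iff {m k : ℕ} (A : Matrix (Fin m) (Fin n) ℝ) (hrank : A.rank = k)
    (i : Fin n) : sortedEig A i ≠ 0 ↔ n - k ≤ (i : ℕ) := by
  classical
  set F := Finset.univ.filter (fun i => sortedEig A i ≠ 0) with hF
  have hcard : F.card = k := sortedEig_card_ne A hrank
  have hup : ∀ i j : Fin n, i ≤ j → i ∈ F → j ∈ F := by
    intro i j hij hi
    simp only [hF, Finset.mem_filter, Finset.mem_univ, true_and] at hi ⊢
    have h1 : 0 < sortedEig A i := lt_of_le_of_ne (sortedEig_nonneg A i) (Ne.symm hi)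
    have h2 : sortedEig A i ≤ sortedEig A j := sortedEig_mono A hij
    exact ne_of_gt (lt_of_lt_of_le h1 h2)
  constructor
  · intro hi
    by_contra hc
    push_neg at hc
    have hsub : Finset.Ici i ⊆ F := fun j hj =>
      hup i j (Finset.mem_Ici.mp hj) (by simp [hF, hi])
    have := Finset.card_le_card hsub
    rw [Fin.card_Ici, hcard] at this
    have := i.2
    omega
  · intro hi
    by_contra hc
    have hsub : F ⊆ Finset.Ioi i := by
      intro j hj
      rw [Finset.mem_Ioi]
      by_contra hji
      push_neg at hji
      exact (by simpa [hF] using hup j i hji hj : sortedEig A i ≠ 0) hc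
    have := Finset.card_le_card hsub
    rw [Fin.card_Ioi, hcard] at this
    have := i.2
    omega

lemma pseudoDet_eq_kDet {m k : ℕ} (A : Matrix (Fin m) (Fin n) ℝ) (hkn : k ≤ n)
    (hrank : A.rank = k) : pseudoDet A = kDet A k := by
  classical
  have hiff : ∀ i : Fin n, singularValues A i ≠ 0 ↔ (i : ℕ) < k := by
    intro i
    rw [singularValues_eq]
    have h0 := sortedEig_nonneg A i.rev
    have hs : Real.sqrt (sortedEig A i.rev) ≠ 0 ↔ sortedEig A i.rev ≠ 0 := by
      constructor
      · intro h hc; exact h (by rw [hc, Real.sqrt_zero])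
      · intro h
        rw [Ne, Real.sqrt_eq_zero h0]
        exact h
    rw [hs, sortedEig_ne_iff A hrank]
    rw [Fin.val_rev]
    have := i.2
    omega
  rw [pseudoDet, kDet]
  have hfil : Finset.univ.filter (fun i => singularValues A i ≠ 0)
      = Finset.univ.filter (fun i : Fin n => (i : ℕ) < k) := by
    apply Finset.filter_congr
    intro i _
    simp [hiff i]
  rw [hfil]
  apply Finset.prod_bij (i := fun (a : Fin n) _ => (a : ℕ))
  · intro a ha
    simp only [Finset.mem_filter, Finset.mem_univ, true_and] at ha
    exact Finset.mem_range.mpr ha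
  · intro a _ b _ hab
    exact Fin.val_injective hab
  · intro b hb
    have hbk : b < k := Finset.mem_range.mp hb
    exact ⟨⟨b, lt_of_lt_of_le hbk hkn⟩, by simp [hbk], rfl⟩
  · intro a ha
    simp only [Finset.mem_filter, Finset.mem_univ, true_and] at ha
    rw [sval, dif_pos a.2]

lemma norm_cpd_diag_le {k : ℕ} (d : Fin n → ℝ) (hd : ∀ i, |d i| ≤ 1) :
    ‖cpd k (Matrix.diagonal d)‖ ≤ 1 := by
  rw [cpd_diagonal]
  apply l2_norm_diagonal_le _ 1 zero_le_one
  intro s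
  rw [Finset.abs_prod]
  exact Finset.prod_le_one (fun i _ => abs_nonneg _) (fun i _ => hd i)

end PseudoDet

open scoped Matrix.Norms.L2Operator

/-- If `A = W_L D_{L-1} ⋯ D_1 W_1` where each `D_ℓ` is diagonal with entries in `{a, 1}`,
`a ∈ (−1, 1]`, and `rank A = k`, then `|A|₊ ≤ ∏_ℓ |W_ℓ|_k`. -/
theorem stmt9 {n : ℕ} (L k : ℕ) (a : ℝ) (ha : -1 < a) (ha' : a ≤ 1)
    (W D : ℕ → Matrix (Fin n) (Fin n) ℝ) (hD0 : D 0 = 1)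
    (hD : ∀ ℓ, 0 < ℓ → ℓ < L → ∃ dvec : Fin n → ℝ,
      D ℓ = Matrix.diagonal dvec ∧ ∀ i, dvec i = a ∨ dvec i = 1)
    (hrank : (netProd W D L).rank = k) :
    pseudoDet (netProd W D L) ≤ ∏ ℓ ∈ Finset.Icc 1 L, kDet (W ℓ) k := by
  classical
  have hkn : k ≤ n := by rw [← hrank]; exact Matrix.rank_le_width _
  have hDle : ∀ ℓ, ℓ < L → ‖cpd k (D ℓ)‖ ≤ 1 := by
    intro ℓ hℓ
    rcases Nat.eq_zero_or_pos ℓ with h0 | hpos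
    · subst h0
      rw [hD0, cpd_one]
      exact l2_norm_one_le
    · obtain ⟨dvec, hDeq, hdv⟩ := hD ℓ hpos hℓ
      rw [hDeq]
      apply norm_cpd_diag_le
      intro i
      rcases hdv i with h | h <;> rw [h]
      · rw [abs_le]; constructor <;> linarith
      · simp
  have hmain : ∀ m, m ≤ L →
      ‖cpd k (netProd W D m)‖ ≤ ∏ ℓ ∈ Finset.Icc 1 m, ‖cpd k (W ℓ)‖ := by
    intro m
    induction m with
    | zero =>
      intro _
      rw [show netProd W D 0 = 1 from rfl, cpd_one]
      rw [show Finset.Icc 1 0 = (∅ : Finset ℕ) from Finset.Icc_eq_empty (by omega),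
        Finset.prod_empty]
      exact l2_norm_one_le
    | succ m ih =>
      intro hm
      have hIH := ih (Nat.le_of_succ_le hm)
      have hd := hDle m (Nat.lt_of_succ_le hm)
      have hstep : netProd W D (m + 1) = W (m + 1) * D m * netProd W D m := rfl
      rw [hstep, cpd_mul, cpd_mul]
      have hx : (0:ℝ) ≤ ‖cpd k (W (m + 1))‖ := l2_norm_nonneg _
      calc ‖cpd k (W (m + 1)) * cpd k (D m) * cpd k (netProd W D m)‖
          ≤ ‖cpd k (W (m + 1)) * cpd k (D m)‖ * ‖cpd k (netProd W D m)‖ :=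
            Matrix.l2_opNorm_mul _ _
        _ ≤ (‖cpd k (W (m + 1))‖ * ‖cpd k (D m)‖) * ‖cpd k (netProd W D m)‖ :=
            mul_le_mul_of_nonneg_right (Matrix.l2_opNorm_mul _ _) (l2_norm_nonneg _)
        _ ≤ ‖cpd k (W (m + 1))‖ * ‖cpd k (netProd W D m)‖ :=
            mul_le_mul_of_nonneg_right
              (mul_le_of_le_one_right hx hd) (l2_norm_nonneg _)
        _ ≤ ‖cpd k (W (m + 1))‖ * ∏ ℓ ∈ Finset.Icc 1 m, ‖cpd k (W ℓ)‖ :=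
            mul_le_mul_of_nonneg_left hIH hx
        _ = ∏ ℓ ∈ Finset.Icc 1 (m + 1), ‖cpd k (W ℓ)‖ := by
            rw [Finset.prod_Icc_succ_top (Nat.succ_le_succ (Nat.zero_le m))]
            ring
  calc pseudoDet (netProd W D L) = kDet (netProd W D L) k :=
        pseudoDet_eq_kDet _ hkn hrank
    _ = ‖cpd k (netProd W D L)‖ := (norm_cpd_eq hkn _).symm
    _ ≤ ∏ ℓ ∈ Finset.Icc 1 L, ‖cpd k (W ℓ)‖ := hmain L le_rfl
    _ = ∏ ℓ ∈ Finset.Icc 1 L, kDet (W ℓ) k :=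
        Finset.prod_congr rfl fun ℓ _ => norm_cpd_eq hkn (W ℓ)
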